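/- Let p be a prime and r ≥ 1 an integer, let ζ = e^{2πi/p^r} ∈ ℂ, and regard M(p^r) as a matrix over ℂ. Then: (i) the all-ones vector is an eigenvector of M(p^r) with eigenvalue −p^{r−1}; (ii) for each j ∈ {1, …, p^r−1}, the vector v_j with entries (v_j)_k = ζ^{jk} (for k ∈ {0, …, p^r−1}) is an eigenvector of M(p^r) with eigenvalue −(p+1)·p^{2r−2−ν_p(j)}. In particular, M(p^r) is invertible. -/

import Mathlib

open Finset

/-- `M(p^r)`: the `p^r × p^r` matrix over `ℂ` whose `(i,j)` entry is `−p^{2r−1}` if `i = j`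
and `p^{2ν_p(i−j)}` otherwise, where `ν_p` is the `p`-adic valuation. -/
def Mpr (p r : ℕ) : Matrix (Fin (p ^ r)) (Fin (p ^ r)) ℂ := fun i j =>
  if i = j then -(p : ℂ) ^ (2 * r - 1)
  else (p : ℂ) ^ (2 * padicValInt p ((i : ℤ) - (j : ℤ)))

/-- The valuation of a nonzero `d < p^r` is less than `r`. -/
lemma val_lt {p r d : ℕ} (hp : p.Prime) (hd0 : d ≠ 0) (hdr : d < p ^ r) :
    padicValNat p d < r := by
  haveI : Fact p.Prime := ⟨hp⟩
  by_contra h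
  push_neg at h
  have : p ^ r ∣ d := (padicValNat_dvd_iff r d).2 (Or.inr h)
  exact absurd (Nat.le_of_dvd (Nat.pos_of_ne_zero hd0) this) (by omega)

/-- `ν_p(p^r − d) = ν_p(d)` for `0 < d < p^r`. -/
lemma val_sub {p r d : ℕ} (hp : p.Prime) (hd0 : d ≠ 0) (hdr : d < p ^ r) :
    padicValNat p (p ^ r - d) = padicValNat p d := by
  haveI : Fact p.Prime := ⟨hp⟩
  have key : ∀ e : ℕ, e ≠ 0 → e < p ^ r → padicValNat p e ≤ padicValNat p (p ^ r - e) := by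
    intro e he0 her
    have hv := val_lt hp he0 her
    have h3 : p ^ padicValNat p e ∣ p ^ r - e :=
      Nat.dvd_sub (pow_dvd_pow _ hv.le) pow_padicValNat_dvd
    rcases (padicValNat_dvd_iff (padicValNat p e) (p ^ r - e)).1 h3 with h | h
    · omega
    · exact h
  have h1 := key d hd0 hdr
  have h2 := key (p ^ r - d) (by omega) (by omega)
  rw [Nat.sub_sub_self hdr.le] at h2
  omega

/-- Integers congruent mod `p^r`, both nonzero with absolute value below `p^r`,
have the same `p`-adic valuation. -/
lemma val_int_eq {p r : ℕ} (hp : p.Prime) {a : ℤ} {d : ℕ} (ha : a ≠ 0) (hd0 : d ≠ 0)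
    (haN : a.natAbs < p ^ r) (hdN : d < p ^ r) (hcong : ((p : ℤ)) ^ r ∣ a - (d : ℤ)) :
    padicValInt p a = padicValNat p d := by
  haveI : Fact p.Prime := ⟨hp⟩
  have hva : padicValInt p a < r := val_lt hp (by simpa using ha) haN
  have hvd : padicValNat p d < r := val_lt hp hd0 hdN
  apply le_antisymm
  · have h1 : (p : ℤ) ^ padicValInt p a ∣ a :=
      (padicValInt_dvd_iff (padicValInt p a) a).2 (Or.inr le_rfl)
    have hc' : (p : ℤ) ^ padicValInt p a ∣ a - (d : ℤ) :=
      dvd_trans (pow_dvd_pow _ hva.le) hcong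
    have h2 : (p : ℤ) ^ padicValInt p a ∣ (d : ℤ) := by
      have := dvd_sub h1 hc'
      simpa using this
    have h3 : p ^ padicValInt p a ∣ d := by
      have := h2
      rw [show ((p : ℤ)) ^ padicValInt p a = ((p ^ padicValInt p a : ℕ) : ℤ) by push_cast; ring,
        Int.natCast_dvd_natCast] at this
      exact this
    rcases (padicValNat_dvd_iff _ d).1 h3 with h | h
    · omega
    · exact h
  · have h1 : (p : ℤ) ^ padicValNat p d ∣ (d : ℤ) := by
      rw [show ((p : ℤ)) ^ padicValNat p d = ((p ^ padicValNat p d : ℕ) : ℤ) by push_cast; ring,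
        Int.natCast_dvd_natCast]
      exact pow_padicValNat_dvd
    have hc' : (p : ℤ) ^ padicValNat p d ∣ a - (d : ℤ) :=
      dvd_trans (pow_dvd_pow _ hvd.le) hcong
    have h2 : (p : ℤ) ^ padicValNat p d ∣ a := by
      have := dvd_add hc' h1
      simpa using this
    rcases (padicValInt_dvd_iff _ a).1 h2 with h | h
    · exact absurd h ha
    · exact h

/-- The off-diagonal entries of `M(p^r)` along the shifted diagonal `(i, d+i)`. -/
lemma entry_eq {p r : ℕ} (hp : p.Prime) {i d : Fin (p ^ r)} (hd : (d : ℕ) ≠ 0) :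
    Mpr p r i (d + i) = (p : ℂ) ^ (2 * padicValNat p (d : ℕ)) := by
  have hN : 0 < p ^ r := Nat.pow_pos hp.pos
  haveI : NeZero (p ^ r) := ⟨hN.ne'⟩
  have hdlt : (d : ℕ) < p ^ r := d.isLt
  have hilt : (i : ℕ) < p ^ r := i.isLt
  have hne : i ≠ d + i := by
    intro h
    apply hd
    have h2 : d + i = 0 + i := by rw [← h, zero_add]
    have : d = 0 := add_right_cancel h2
    simp [this]
  rw [Mpr, if_neg hne]
  congr 2
  have hne' : (i : ℕ) ≠ ((d + i : Fin (p ^ r)) : ℕ) := fun h => hne (Fin.ext h)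
  have hk : ((d + i : Fin (p ^ r)) : ℕ) = ((d : ℕ) + i) % p ^ r := by
    simp [Fin.add_def]
  have hslt : ((d + i : Fin (p ^ r)) : ℕ) < p ^ r := (d + i).isLt
  generalize hgen : ((d + i : Fin (p ^ r)) : ℕ) = k at hk hslt hne' ⊢
  have ha : ((i : ℤ) - (k : ℤ)) ≠ 0 := by omega
  rw [val_int_eq (r := r) hp ha (d := p ^ r - (d : ℕ)) (by omega) (by omega) (by omega) ?_]
  · exact val_sub hp hd hdlt
  · set q := ((d : ℕ) + (i : ℕ)) / p ^ r with hq
    refine ⟨(q : ℤ) - 1, ?_⟩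
    have e1 : ((p : ℤ)) ^ r * ((q : ℤ) - 1) = ((p ^ r * q : ℕ) : ℤ) - ((p ^ r : ℕ) : ℤ) := by
      push_cast; ring
    rw [e1]
    have hmd : ((d : ℕ) + (i : ℕ)) % p ^ r + p ^ r * q = (d : ℕ) + i :=
      Nat.mod_add_div _ _
    omega

/-- The coefficients `c_0 = 1`, `c_s = p^{2s} − p^{2s−2}`. -/
noncomputable def cc (p : ℕ) (s : ℕ) : ℂ := if s = 0 then 1 else (p:ℂ)^(2*s) - (p:ℂ)^(2*s-2)

lemma csum (p : ℕ) (m : ℕ) : ∑ s ∈ range (m+1), cc p s = (p:ℂ)^(2*m) := by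
  induction m with
  | zero => simp [cc]
  | succ m ih =>
    rw [Finset.sum_range_succ, ih, cc, if_neg (Nat.succ_ne_zero m),
      show 2*(m+1)-2 = 2*m by omega, show 2*(m+1) = 2*m+2 by omega]
    ring

/-- Telescoping expansion of `p^{2ν_p(d)}`. -/
lemma L3 {p r d : ℕ} (hp : p.Prime) (hd0 : d ≠ 0) (hdr : d < p ^ r) :
    (p:ℂ)^(2 * padicValNat p d) = ∑ s ∈ range r, if p^s ∣ d then cc p s else 0 := by
  haveI : Fact p.Prime := ⟨hp⟩
  have hv : padicValNat p d < r := val_lt hp hd0 hdr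
  have hcong : ∀ s ∈ range r, (if p^s ∣ d then cc p s else 0)
      = (if s ≤ padicValNat p d then cc p s else 0) := by
    intro s _
    refine if_congr ?_ rfl rfl
    rw [padicValNat_dvd_iff]
    simp [hd0]
  rw [Finset.sum_congr rfl hcong, Finset.sum_ite, Finset.sum_const_zero, add_zero]
  have hfil : (range r).filter (fun s => s ≤ padicValNat p d) = range (padicValNat p d + 1) := by
    ext s; simp; omega
  rw [hfil, csum]

/-- Geometric sum over multiples of `p^s`. -/
lemma Bval {p r : ℕ} (hp : p.Prime) (ζ : ℂ) (hζ : IsPrimitiveRoot ζ (p^r))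
    {s : ℕ} (hs : s ≤ r) (j : ℕ) :
    ∑ d ∈ range (p^r), (if p^s ∣ d then ζ^(j*d) else 0)
      = if p^(r-s) ∣ j then ((p^(r-s) : ℕ) : ℂ) else 0 := by
  have hps : 0 < p ^ s := Nat.pow_pos hp.pos
  have hsplit : p ^ s * p ^ (r-s) = p ^ r := by
    rw [← pow_add]; congr 1; omega
  rw [← Finset.sum_filter]
  have hfil : (range (p^r)).filter (fun d => p^s ∣ d)
      = (range (p^(r-s))).image (fun m => p^s * m) := by
    ext d
    simp only [Finset.mem_filter, Finset.mem_range, Finset.mem_image]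
    constructor
    · rintro ⟨hd, m, rfl⟩
      rw [← hsplit] at hd
      exact ⟨m, Nat.lt_of_mul_lt_mul_left hd, rfl⟩
    · rintro ⟨m, hm, rfl⟩
      exact ⟨by rw [← hsplit]; exact (Nat.mul_lt_mul_left hps).2 hm, Dvd.intro m rfl⟩
  rw [hfil, Finset.sum_image (by intro a _ b _ h; exact Nat.eq_of_mul_eq_mul_left hps h)]
  have hterm : ∀ m, ζ^(j*(p^s*m)) = (ζ^(j*p^s))^m := by
    intro m; rw [← pow_mul, mul_assoc]
  simp only [hterm]
  set ξ := ζ^(j*p^s) with hξ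
  have hiff : ξ = 1 ↔ p^(r-s) ∣ j := by
    rw [hξ, hζ.pow_eq_one_iff_dvd, ← hsplit, mul_comm (p^s)]
    rw [Nat.mul_dvd_mul_iff_right hps]
  have hxiL : ξ ^ (p^(r-s)) = 1 := by
    rw [hξ, ← pow_mul, mul_assoc, hsplit, mul_comm j, pow_mul, hζ.pow_eq_one, one_pow]
  by_cases hone : ξ = 1
  · rw [if_pos (hiff.1 hone), hone]
    simp
  · rw [if_neg (fun h => hone (hiff.2 h)), geom_sum_eq hone, hxiL, sub_self, zero_div]

/-- The key telescoping-geometric identity. -/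
lemma T2 {p : ℕ} (hp : p.Prime) {a b : ℕ} (ha : 1 ≤ a) (hab : a ≤ b) :
    ∑ s ∈ Ico a b, cc p s * (p:ℂ)^(b - s)
      = ((p:ℂ)+1) * ((p:ℂ)^(2*b-2) - (p:ℂ)^(a+b-2)) := by
  set q : ℂ := (p:ℂ) with hq
  have hq0 : q ≠ 0 := by
    simp [hq, Nat.cast_eq_zero, hp.ne_zero]
  have hq1 : q ≠ 1 := by
    rw [hq]
    intro h
    have : p = 1 := by exact_mod_cast h
    exact hp.one_lt.ne' this
  have hterm : ∀ s ∈ Ico a b, cc p s * q^(b-s) = (q^2 - 1) * (q^(b-1) * q^(s-1)) := by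
    intro s hs
    simp only [Finset.mem_Ico] at hs
    rw [cc, if_neg (by omega)]
    have e1 : q^(2*s) = q^2 * q^(2*s-2) := by
      rw [← pow_add]; congr 1; omega
    have e2 : q^(2*s-2) * q^(b-s) = q^(b-1) * q^(s-1) := by
      rw [← pow_add, ← pow_add]; congr 1; omega
    rw [e1, ← e2]
    ring
  rw [Finset.sum_congr rfl hterm, ← Finset.mul_sum, ← Finset.mul_sum]
  rw [Finset.sum_Ico_eq_sum_range]
  have hterm2 : ∀ k ∈ range (b - a), q^(a + k - 1) = q^(a-1) * q^k := by
    intro k _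
    rw [← pow_add]; congr 1; omega
  rw [Finset.sum_congr rfl hterm2, ← Finset.mul_sum, geom_sum_eq hq1]
  have e3 : q^(a-1) * q^(b-a) = q^(b-1) := by rw [← pow_add]; congr 1; omega
  have e4 : q^(b-1) * q^(a-1) = q^(a+b-2) := by rw [← pow_add]; congr 1; omega
  have e5 : q^(a+b-2) * q^(b-a) = q^(2*b-2) := by rw [← pow_add]; congr 1; omega
  have hq1' : q - 1 ≠ 0 := sub_ne_zero.2 hq1
  field_simp
  linear_combination (-q^2 + q^2*q^(b-a) + 1 - q^(b-a)) * e4 + (q^2 - 1) * e5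

/-- Evaluation of the eigenvalue sum. -/
lemma Fval {p r : ℕ} (hp : p.Prime) (hr : 1 ≤ r) (ζ : ℂ)
    (hζ : IsPrimitiveRoot ζ (p^r)) (j : ℕ) (hj : j < p ^ r) :
    ∑ d ∈ range (p^r), (if d = 0 then -(p:ℂ)^(2*r-1) else (p:ℂ)^(2*padicValNat p d)) * ζ^(j*d)
      = if j = 0 then -(p:ℂ)^(r-1)
        else -((p:ℂ)+1) * (p:ℂ)^(2*r-2-padicValNat p j) := by
  have hN : 0 < p ^ r := Nat.pow_pos hp.pos
  set q : ℂ := (p:ℂ) with hq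
  rw [Finset.range_eq_Ico, Finset.sum_eq_sum_Ico_succ_bot hN]
  have h0 : (if (0:ℕ) = 0 then -q^(2*r-1) else q^(2*padicValNat p 0)) * ζ^(j*0) = -q^(2*r-1) := by
    simp
  rw [h0]
  have hcong : ∀ d ∈ Ico 1 (p^r),
      (if d = 0 then -q^(2*r-1) else q^(2*padicValNat p d)) * ζ^(j*d)
        = ∑ s ∈ range r, (if p^s ∣ d then cc p s * ζ^(j*d) else 0) := by
    intro d hd
    simp only [Finset.mem_Ico] at hd
    rw [if_neg (by omega), L3 (r := r) hp (by omega) (by omega), Finset.sum_mul]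
    refine Finset.sum_congr rfl fun s _ => ?_
    rw [ite_mul, zero_mul]
  rw [Finset.sum_congr rfl hcong, Finset.sum_comm]
  have hinner : ∀ s ∈ range r,
      ∑ d ∈ Ico 1 (p^r), (if p^s ∣ d then cc p s * ζ^(j*d) else 0)
        = cc p s * (if p^(r-s) ∣ j then ((p^(r-s) : ℕ) : ℂ) else 0) - cc p s := by
    intro s hs
    simp only [Finset.mem_range] at hs
    have hsplit := Finset.sum_eq_sum_Ico_succ_bot hN
      (fun d => if p^s ∣ d then cc p s * ζ^(j*d) else 0)
    have h00 : (if p^s ∣ 0 then cc p s * ζ^(j*0) else 0) = cc p s := by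
      simp
    rw [h00] at hsplit
    have : ∑ d ∈ Ico 1 (p^r), (if p^s ∣ d then cc p s * ζ^(j*d) else 0)
        = (∑ d ∈ Ico 0 (p^r), (if p^s ∣ d then cc p s * ζ^(j*d) else 0)) - cc p s := by
      rw [hsplit]; ring
    rw [this]
    have : ∑ d ∈ Ico 0 (p^r), (if p^s ∣ d then cc p s * ζ^(j*d) else 0)
        = cc p s * ∑ d ∈ Ico 0 (p^r), (if p^s ∣ d then ζ^(j*d) else 0) := by
      rw [Finset.mul_sum]
      refine Finset.sum_congr rfl fun d _ => ?_
      rw [mul_ite, mul_zero]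
    rw [this]
    have hB := Bval hp ζ hζ hs.le j
    rw [Finset.range_eq_Ico] at hB
    rw [hB]
  rw [Finset.sum_congr rfl hinner, Finset.sum_sub_distrib]
  have hcsum : ∑ s ∈ range r, cc p s = q^(2*r-2) := by
    obtain ⟨m, rfl⟩ : ∃ m, r = m + 1 := ⟨r - 1, by omega⟩
    rw [show 2*(m+1)-2 = 2*m by omega, hq]
    exact csum p m
  rw [hcsum]
  have hq0 : q ≠ 0 := by simp [hq, hp.ne_zero]
  by_cases hj0 : j = 0
  · subst hj0
    rw [if_pos rfl]
    have hBv : ∀ s ∈ range r, cc p s * (if p^(r-s) ∣ 0 then ((p^(r-s) : ℕ) : ℂ) else 0)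
        = cc p s * q^(r-s) := by
      intro s _
      rw [if_pos (dvd_zero _)]
      push_cast [hq]
      ring
    rw [Finset.sum_congr rfl hBv, Finset.range_eq_Ico, Finset.sum_eq_sum_Ico_succ_bot hr]
    have hcc0 : cc p 0 * q^(r-0) = q^r := by simp [cc]
    rw [hcc0, T2 hp le_rfl hr]
    have e1 : q^(2*r-1) = q^1 * q^(2*r-2) := by rw [← pow_add]; congr 1; omega
    have e3 : q^r = q^1 * q^(r-1) := by rw [← pow_add]; congr 1; omega
    have e4 : q^(1+r-2) = q^(r-1) := by congr 1; omega
    rw [e4]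
    linear_combination -e1 + e3
  · rw [if_neg hj0]
    set t := padicValNat p j with ht
    have htr : t < r := val_lt hp hj0 hj
    have hBv : ∀ s ∈ range r, cc p s * (if p^(r-s) ∣ j then ((p^(r-s) : ℕ) : ℂ) else 0)
        = if r - t ≤ s then cc p s * q^(r-s) else 0 := by
      intro s hs
      simp only [Finset.mem_range] at hs
      haveI : Fact p.Prime := ⟨hp⟩
      have hdvd : p^(r-s) ∣ j ↔ r - t ≤ s := by
        rw [padicValNat_dvd_iff]
        simp [hj0, ← ht]
        omega
      by_cases hc : r - t ≤ s
      · rw [if_pos (hdvd.2 hc), if_pos hc]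
        push_cast [hq]
        ring
      · rw [if_neg (fun h => hc (hdvd.1 h)), if_neg hc, mul_zero]
    rw [Finset.sum_congr rfl hBv]
    have hfil : ∑ s ∈ range r, (if r - t ≤ s then cc p s * q^(r-s) else 0)
        = ∑ s ∈ Ico (r-t) r, cc p s * q^(r-s) := by
      rw [Finset.sum_ite, Finset.sum_const_zero, add_zero]
      congr 1
      ext s
      simp only [Finset.mem_filter, Finset.mem_range, Finset.mem_Ico]
      omega
    rw [hfil, T2 hp (by omega) (by omega)]
    have e1 : q^(2*r-1) = q^1 * q^(2*r-2) := by rw [← pow_add]; congr 1; omega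
    have e2 : q^(r-t+r-2) = q^(2*r-2-t) := by congr 1; omega
    rw [e2]
    linear_combination -e1

/-- `mulVec` of `M(p^r)` against the character vector, in reindexed sum form. -/
lemma mulVec_eq {p r : ℕ} (hp : p.Prime) (ζ : ℂ) (hζ : IsPrimitiveRoot ζ (p^r))
    (j i : Fin (p^r)) :
    (Mpr p r).mulVec (fun k => ζ ^ ((j:ℕ) * (k:ℕ))) i
      = (∑ d ∈ range (p^r),
          (if d = 0 then -(p:ℂ)^(2*r-1) else (p:ℂ)^(2*padicValNat p d)) * ζ^((j:ℕ)*d))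
        * ζ ^ ((j:ℕ)*(i:ℕ)) := by
  have hN : 0 < p ^ r := Nat.pow_pos hp.pos
  haveI : NeZero (p ^ r) := ⟨hN.ne'⟩
  have hz : ζ ^ (p ^ r) = 1 := hζ.pow_eq_one
  have key : ∀ a b : ℕ, a % (p^r) = b % (p^r) → ζ^a = ζ^b := by
    intro a b hab
    conv_lhs => rw [← Nat.div_add_mod a (p^r)]
    conv_rhs => rw [← Nat.div_add_mod b (p^r)]
    rw [pow_add, pow_add, pow_mul, pow_mul, hz, one_pow, one_pow, hab]
  rw [Finset.sum_mul, ← Fin.sum_univ_eq_sum_range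
    (fun d => (if d = 0 then -(p:ℂ)^(2*r-1) else (p:ℂ)^(2*padicValNat p d)) * ζ^((j:ℕ)*d)
      * ζ ^ ((j:ℕ)*(i:ℕ)))]
  simp only [Matrix.mulVec, dotProduct]
  refine (Fintype.sum_equiv (Equiv.addRight i)
    (fun d => (if (d:ℕ) = 0 then -(p:ℂ)^(2*r-1) else (p:ℂ)^(2*padicValNat p (d:ℕ)))
        * ζ^((j:ℕ)*(d:ℕ)) * ζ ^ ((j:ℕ)*(i:ℕ)))
    (fun k => Mpr p r i k * ζ^((j:ℕ)*(k:ℕ))) (fun d => ?_)).symm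
  show (if (d:ℕ) = 0 then -(p:ℂ)^(2*r-1) else (p:ℂ)^(2*padicValNat p (d:ℕ)))
        * ζ^((j:ℕ)*(d:ℕ)) * ζ ^ ((j:ℕ)*(i:ℕ))
      = Mpr p r i (d + i) * ζ^((j:ℕ)*((d + i : Fin (p^r)):ℕ))
  have hpow : ζ ^ ((j:ℕ) * ((d + i : Fin (p^r)):ℕ)) = ζ^((j:ℕ)*(d:ℕ)) * ζ^((j:ℕ)*(i:ℕ)) := by
    rw [← pow_add, ← mul_add]
    apply key
    have h1 : ((d + i : Fin (p^r)):ℕ) = ((d:ℕ) + (i:ℕ)) % (p^r) := Fin.val_add d i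
    rw [h1]
    exact Nat.ModEq.mul_left (j:ℕ) (Nat.mod_modEq _ _)
  by_cases hd : (d:ℕ) = 0
  · have hd0 : d = 0 := Fin.ext (by simpa using hd)
    subst hd0
    rw [zero_add]
    rw [Mpr, if_pos rfl, if_pos hd]
    simp only [hd, Nat.mul_zero, pow_zero, mul_one]
  · rw [entry_eq hp hd, hpow, if_neg hd]
    ring

/-- Let `p` be a prime, `r ≥ 1`, `ζ = e^{2πi/p^r}`. Then (i) the all-ones
vector is an eigenvector of `M(p^r)` with eigenvalue `−p^{r−1}`; (ii) for each nonzero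
`j ∈ {1, …, p^r−1}`, the vector `v_j` with `(v_j)_k = ζ^{jk}` is an eigenvector of `M(p^r)`
with eigenvalue `−(p+1)·p^{2r−2−ν_p(j)}`. In particular, `M(p^r)` is invertible. -/
theorem stmt10 (p r : ℕ) (hp : p.Prime) (hr : 1 ≤ r)
    (ζ : ℂ) (hζ : ζ = Complex.exp (2 * Real.pi * Complex.I / (p ^ r : ℕ))) :
    ((Mpr p r).mulVec (fun _ => 1) = (-(p : ℂ) ^ (r - 1)) • (fun _ => (1 : ℂ))) ∧
    (∀ j : Fin (p ^ r), (j : ℕ) ≠ 0 →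
      (Mpr p r).mulVec (fun k : Fin (p ^ r) => ζ ^ ((j : ℕ) * (k : ℕ))) =
        (-((p : ℂ) + 1) * (p : ℂ) ^ (2 * (r : ℤ) - 2 - (padicValNat p (j : ℕ) : ℤ))) •
          (fun k : Fin (p ^ r) => ζ ^ ((j : ℕ) * (k : ℕ)))) ∧
    IsUnit (Mpr p r) := by
  have hN : 0 < p ^ r := Nat.pow_pos hp.pos
  haveI : NeZero (p ^ r) := ⟨hN.ne'⟩
  have hζ' : IsPrimitiveRoot ζ (p ^ r) := by
    rw [hζ]; exact Complex.isPrimitiveRoot_exp _ hN.ne'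
  have eig : ∀ j i : Fin (p ^ r),
      (Mpr p r).mulVec (fun k => ζ ^ ((j:ℕ) * (k:ℕ))) i
        = (if (j:ℕ) = 0 then -(p:ℂ)^(r-1)
           else -((p:ℂ)+1) * (p:ℂ)^(2*r-2-padicValNat p (j:ℕ))) * ζ ^ ((j:ℕ)*(i:ℕ)) := by
    intro j i
    rw [mulVec_eq hp ζ hζ' j i, Fval hp hr ζ hζ' (j:ℕ) j.isLt]
  have hq0 : (p:ℂ) ≠ 0 := by simp [hp.ne_zero]
  refine ⟨?_, ?_, ?_⟩
  · -- part (i)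
    have h1 : (fun k : Fin (p^r) => ζ ^ (((0 : Fin (p^r)):ℕ) * (k:ℕ))) = fun _ => (1:ℂ) := by
      funext k; simp
    funext i
    conv_lhs => rw [← h1]
    rw [eig 0 i]
    simp
  · -- part (ii)
    intro j hj0
    funext k
    rw [eig j k, Pi.smul_apply, smul_eq_mul, if_neg hj0]
    have ht : padicValNat p (j:ℕ) < r := val_lt hp hj0 j.isLt
    have hzp : (p:ℂ) ^ (2*(r:ℤ) - 2 - (padicValNat p (j:ℕ) : ℤ))
        = (p:ℂ)^((2*r-2-padicValNat p (j:ℕ) : ℕ)) := by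
      rw [show (2*(r:ℤ) - 2 - (padicValNat p (j:ℕ) : ℤ))
          = ((2*r-2-padicValNat p (j:ℕ) : ℕ) : ℤ) by omega, zpow_natCast]
    rw [hzp]
  · -- invertibility
    rw [Matrix.isUnit_iff_isUnit_det, isUnit_iff_ne_zero]
    set Λ : Fin (p^r) → ℂ := fun j => if (j:ℕ) = 0 then -(p:ℂ)^(r-1)
      else -((p:ℂ)+1) * (p:ℂ)^(2*r-2-padicValNat p (j:ℕ)) with hΛ
    set V : Matrix (Fin (p^r)) (Fin (p^r)) ℂ :=
      Matrix.vandermonde (fun i : Fin (p^r) => ζ^(i:ℕ)) with hV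
    have hVij : ∀ i k : Fin (p^r), V i k = ζ^((i:ℕ)*(k:ℕ)) := by
      intro i k
      rw [hV, Matrix.vandermonde]
      exact (pow_mul ζ _ _).symm
    have hMV : Mpr p r * V = V * Matrix.diagonal Λ := by
      ext i k
      rw [Matrix.mul_diagonal, Matrix.mul_apply]
      have hL : ∑ l, Mpr p r i l * V l k
          = (Mpr p r).mulVec (fun l => ζ ^ ((k:ℕ)*(l:ℕ))) i := by
        simp only [Matrix.mulVec, dotProduct]
        refine Finset.sum_congr rfl fun l _ => ?_
        rw [hVij l k, mul_comm (l:ℕ) (k:ℕ)]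
      rw [hL, eig k i, hVij i k, mul_comm (i:ℕ) (k:ℕ), hΛ]
      ring
    have hdetV : V.det ≠ 0 := by
      rw [hV, Matrix.det_vandermonde]
      rw [Finset.prod_ne_zero_iff]
      intro i _
      rw [Finset.prod_ne_zero_iff]
      intro jj hjj
      rw [sub_ne_zero]
      intro hc
      have h1 : (jj:ℕ) = (i:ℕ) := hζ'.pow_inj jj.isLt i.isLt hc
      have h2 : jj = i := Fin.ext h1
      simp only [Finset.mem_Ioi] at hjj
      exact absurd h2 (ne_of_gt hjj)
    have hdet : (Mpr p r).det = (Matrix.diagonal Λ).det := by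
      have h := congrArg Matrix.det hMV
      rw [Matrix.det_mul, Matrix.det_mul] at h
      exact mul_right_cancel₀ hdetV (h.trans (mul_comm _ _))
    rw [hdet, Matrix.det_diagonal, Finset.prod_ne_zero_iff]
    intro j _
    by_cases h : (j:ℕ) = 0
    · simp only [hΛ, if_pos h, neg_ne_zero]
      exact pow_ne_zero _ hq0
    · simp only [hΛ, if_neg h]
      apply mul_ne_zero
      · have hne : ((p+1:ℕ):ℂ) ≠ 0 := Nat.cast_ne_zero.2 (by omega)
        intro hc
        apply hne
        push_cast
        linear_combination -hc
      · exact pow_ne_zero _ hq0
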